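/- Let d ≥ 2, f ≥ 1 be integers, n = d·f + 1, let r, s be real numbers with r ≠ s, and let M be a d×d real matrix all of whose entries lie in {0,1}. Set P₀ = r·M + s·(J − M). If P₀·J = −J and f·J + P₀·P₀ᵀ = n·I, then there exist integers k and λ with 0 ≤ λ < k < d such that M·J = k·J, J·M = k·J, and M·Mᵀ = (k − λ)·I + λ·J; in other words, M is an incidence matrix of a symmetric 2-(d,k,λ) design. -/

import Mathlib

open Matrix Finset

/-- the 0-1 matrix `M` hidden in the principal part `P₀ = r•M + s•(J−M)`
is an incidence matrix of a symmetric 2-(d,k,λ) design. -/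
theorem pseudocyclic_principal_part_is_symmetric_design
    (d f : ℕ) (hd : 2 ≤ d) (hf : 1 ≤ f)
    (r s : ℝ) (hrs : r ≠ s)
    (M J P₀ : Matrix (Fin d) (Fin d) ℝ)
    (hJ : ∀ i j, J i j = 1)
    (hM01 : ∀ i j, M i j = 0 ∨ M i j = 1)
    (hP : P₀ = r • M + s • (J - M))
    (horth1 : P₀ * J = -J)
    (horth2 : (f : ℝ) • J + P₀ * P₀ᵀ =
      ((d : ℝ) * (f : ℝ) + 1) • (1 : Matrix (Fin d) (Fin d) ℝ)) :
    ∃ k lam : ℤ, 0 ≤ lam ∧ lam < k ∧ k < (d : ℤ) ∧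
      M * J = (k : ℝ) • J ∧
      J * M = (k : ℝ) • J ∧
      M * Mᵀ = ((k : ℝ) - (lam : ℝ)) • (1 : Matrix (Fin d) (Fin d) ℝ) + (lam : ℝ) • J := by
  classical
  set t : ℝ := r - s with ht_def
  have ht : t ≠ 0 := sub_ne_zero.mpr hrs
  have ht2 : t ^ 2 ≠ 0 := pow_ne_zero 2 ht
  have ht2pos : 0 < t ^ 2 := lt_of_le_of_ne (sq_nonneg t) (Ne.symm ht2)
  have hdpos : (0 : ℝ) < d := by positivity
  have hJT : Jᵀ = J := by ext i j; simp [transpose_apply, hJ]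
  have hJJ : J * J = (d : ℝ) • J := by
    ext i j
    simp [mul_apply, hJ, Finset.sum_const, Finset.card_univ, smul_eq_mul]
  have hP' : P₀ = t • M + s • J := by rw [hP, ht_def]; module
  set i₀ : Fin d := ⟨0, by omega⟩ with hi₀
  set i₁ : Fin d := ⟨1, by omega⟩ with hi₁
  have hi01 : i₀ ≠ i₁ := by simp [hi₀, hi₁, Fin.ext_iff]
  set kr : ℝ := (-1 - s * d) / t with hkr_def
  -- constant row sums
  have hS : ∀ i : Fin d, ∑ l, M i l = kr := by
    intro i
    have h : (P₀ * J) i i = (-J) i i := by rw [horth1]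
    rw [hP'] at h
    simp only [mul_apply, Matrix.add_apply, Matrix.smul_apply, hJ, smul_eq_mul, mul_one, Matrix.neg_apply] at h
    rw [Finset.sum_add_distrib, ← Finset.mul_sum, Finset.sum_const, Finset.card_univ,
      Fintype.card_fin] at h
    rw [nsmul_eq_mul] at h
    rw [hkr_def, eq_div_iff ht]
    linarith [h]
  have hMJ : M * J = kr • J := by
    ext i j
    simp only [mul_apply, hJ, mul_one, Matrix.smul_apply, smul_eq_mul]
    rw [hS i]
  have hJMT : J * Mᵀ = kr • J := by
    have h := congrArg transpose hMJ
    rw [transpose_mul, hJT, transpose_smul, hJT] at h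
    exact h
  have hPP : P₀ * P₀ᵀ = t ^ 2 • (M * Mᵀ) + (2 * t * s * kr + s ^ 2 * d) • J := by
    rw [hP', transpose_add, transpose_smul, transpose_smul, hJT]
    simp only [Matrix.add_mul, Matrix.mul_add, Matrix.smul_mul, Matrix.mul_smul,
      hMJ, hJMT, hJJ, smul_smul]
    match_scalars <;> ring
  set α : ℝ := ((d : ℝ) * f + 1) / t ^ 2 with hα_def
  set γ : ℝ := (-(f : ℝ) - (2 * t * s * kr + s ^ 2 * d)) / t ^ 2 with hγ_def
  have hMMT : M * Mᵀ = α • 1 + γ • J := by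
    have h := horth2
    rw [hPP] at h
    have h3 := eq_sub_of_add_eq' h
    have h4 := eq_sub_of_add_eq h3
    have h5 : t ^ 2 • (M * Mᵀ) = t ^ 2 • (α • 1 + γ • J) := by
      rw [h4, hα_def, hγ_def]
      match_scalars <;> field_simp
    exact smul_right_injective (Matrix (Fin d) (Fin d) ℝ) ht2 h5
  have hdiag : ∀ i, (M * Mᵀ) i i = ∑ l, M i l := by
    intro i
    rw [mul_apply]
    apply Finset.sum_congr rfl
    intro l _
    rcases hM01 i l with h | h <;> simp [transpose_apply, h]
  have hαγ : kr = α + γ := by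
    have h : (M * Mᵀ) i₀ i₀ = (α • 1 + γ • J) i₀ i₀ := by rw [hMMT]
    rw [hdiag, hS] at h
    simpa [one_apply_eq, hJ] using h
  have hoff : (M * Mᵀ) i₀ i₁ = γ := by
    rw [hMMT]
    simp [one_apply_ne hi01, hJ]
  set kN : ℕ := (univ.filter (fun l => M i₀ l = 1)).card with hkN_def
  set lamN : ℕ := (univ.filter (fun l => M i₀ l = 1 ∧ M i₁ l = 1)).card with hlamN_def
  have hkrN : kr = (kN : ℝ) := by
    rw [← hS i₀, hkN_def]
    rw [show (∑ l, M i₀ l) = ∑ l, (if M i₀ l = 1 then (1:ℝ) else 0) by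
      apply Finset.sum_congr rfl
      intro l _
      rcases hM01 i₀ l with h | h <;> simp [h]]
    rw [Finset.sum_boole]
  have hγN : γ = (lamN : ℝ) := by
    rw [← hoff, mul_apply, hlamN_def]
    rw [show (∑ l, M i₀ l * Mᵀ l i₁) = ∑ l, (if M i₀ l = 1 ∧ M i₁ l = 1 then (1:ℝ) else 0) by
      apply Finset.sum_congr rfl
      intro l _
      rcases hM01 i₀ l with h | h <;> rcases hM01 i₁ l with h' | h' <;>
        simp [transpose_apply, h, h']]
    rw [Finset.sum_boole]
  have hαpos : 0 < α := by
    rw [hα_def]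
    apply div_pos _ ht2pos
    have : (0:ℝ) ≤ (d:ℝ) * f := by positivity
    linarith
  have hγ0 : 0 ≤ γ := by rw [hγN]; exact Nat.cast_nonneg _
  have hlamk : (lamN : ℝ) < (kN : ℝ) := by
    rw [← hγN, ← hkrN]
    linarith [hαγ]
  have hkrpos : 0 < kr := by rw [hαγ]; linarith
  have hkled : kN ≤ d := by
    calc kN ≤ (univ : Finset (Fin d)).card := Finset.card_filter_le _ _
      _ = d := by simp
  have hkned : kN ≠ d := by
    intro hEq
    have hall : ∀ l, M i₀ l = 1 := by
      have hnn : ∀ l ∈ (univ : Finset (Fin d)), (0:ℝ) ≤ 1 - M i₀ l := by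
        intro l _
        rcases hM01 i₀ l with h | h <;> simp [h]
      have hsum : ∑ l, ((1:ℝ) - M i₀ l) = 0 := by
        rw [Finset.sum_sub_distrib, Finset.sum_const, Finset.card_univ, Fintype.card_fin,
          hS i₀, hkrN, hEq]
        simp
      intro l
      have := (Finset.sum_eq_zero_iff_of_nonneg hnn).mp hsum l (mem_univ l)
      linarith
    have hγkr : γ = kr := by
      rw [← hoff, mul_apply, ← hS i₁]
      apply Finset.sum_congr rfl
      intro l _
      simp [transpose_apply, hall l]
    linarith [hαγ, hαpos]
  -- the dual equation J * M = kr • J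
  set μ : ℝ := α + γ * d with hμ_def
  have hμpos : 0 < μ := by
    have : 0 ≤ γ * d := mul_nonneg hγ0 hdpos.le
    rw [hμ_def]; linarith
  set e : ℝ := -γ / (α * μ) with he_def
  set C : Matrix (Fin d) (Fin d) ℝ := α⁻¹ • 1 + e • J with hC_def
  have hAC : (α • 1 + γ • J) * C = 1 := by
    rw [hC_def]
    simp only [Matrix.add_mul, Matrix.mul_add, Matrix.smul_mul, Matrix.mul_smul, hJJ,
      Matrix.one_mul, Matrix.mul_one, smul_smul]
    have hαne : α ≠ 0 := hαpos.ne'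
    have hμne : μ ≠ 0 := hμpos.ne'
    match_scalars
    · field_simp
    · rw [he_def, hμ_def]
      field_simp
      ring
  have hMB : M * (Mᵀ * C) = 1 := by
    rw [← Matrix.mul_assoc, hMMT]; exact hAC
  set B : Matrix (Fin d) (Fin d) ℝ := Mᵀ * C with hB_def
  have hBM : B * M = 1 := mul_eq_one_comm.mp hMB
  have hBJ : B * J = kr⁻¹ • J := by
    have h1 : J = kr • (B * J) := by
      calc J = (B * M) * J := by rw [hBM, Matrix.one_mul]
        _ = B * (kr • J) := by rw [Matrix.mul_assoc, hMJ]
        _ = kr • (B * J) := by rw [Matrix.mul_smul]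
    calc B * J = kr⁻¹ • (kr • (B * J)) := by
          rw [smul_smul, inv_mul_cancel₀ hkrpos.ne', one_smul]
      _ = kr⁻¹ • J := by rw [← h1]
  have hBA : B * (M * Mᵀ) = Mᵀ := by
    rw [← Matrix.mul_assoc, hBM, Matrix.one_mul]
  have hA'J : (α • 1 + γ • J) * J = μ • J := by
    rw [Matrix.add_mul, Matrix.smul_mul, Matrix.smul_mul, hJJ, Matrix.one_mul, smul_smul]
    match_scalars
    rw [hμ_def]; ring
  have hMTJ : Mᵀ * J = (μ * kr⁻¹) • J := by
    calc Mᵀ * J = B * ((M * Mᵀ) * J) := by rw [← Matrix.mul_assoc, hBA]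
      _ = B * (μ • J) := by rw [hMMT, hA'J]
      _ = (μ * kr⁻¹) • J := by rw [Matrix.mul_smul, hBJ, smul_smul]
  have hμk : μ * kr⁻¹ = kr := by
    have h1 : (J * Mᵀ) * J = J * (Mᵀ * J) := Matrix.mul_assoc J Mᵀ J
    rw [hJMT, hMTJ, Matrix.smul_mul, Matrix.mul_smul, hJJ, smul_smul, smul_smul] at h1
    have h2 := Matrix.ext_iff.mpr h1 i₀ i₀
    simp only [Matrix.smul_apply, hJ, smul_eq_mul, mul_one] at h2
    have hdne : (d:ℝ) ≠ 0 := hdpos.ne'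
    exact (mul_right_cancel₀ hdne h2).symm
  have hMTJ' : Mᵀ * J = kr • J := by rw [hMTJ, hμk]
  have hJM : J * M = kr • J := by
    have h := congrArg transpose hMTJ'
    rw [transpose_mul, transpose_transpose, hJT, transpose_smul, hJT] at h
    exact h
  refine ⟨(kN : ℤ), (lamN : ℤ), Int.ofNat_nonneg _, by exact_mod_cast hlamk, ?_, ?_, ?_, ?_⟩
  · exact_mod_cast lt_of_le_of_ne hkled hkned
  · rw [hMJ, hkrN]; norm_cast
  · rw [hJM, hkrN]; norm_cast
  · have hα' : α = (kN : ℝ) - (lamN : ℝ) := by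
      rw [← hkrN, ← hγN]; linarith [hαγ]
    rw [hMMT, hα', hγN]; norm_cast
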